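/- Let I = (G, T, R, k, l) be an MMCU instance and let u_1, ..., u_t ∈ T be pairwise distinct, pairwise nonadjacent terminals of the same equivalence class of R with N_G(u_1) = N_G(u_2) = ... = N_G(u_t) ⊆ V(G) \ T and t > l + 2. Let I' be obtained from I by deleting the terminals u_{l+3}, ..., u_t from the graph (and removing them from T and from R). Then the set of minimal solutions of I and the set of minimal solutions of I' are equal. -/

import Mathlib

/-- A multigraph on vertex type `V` with edge type `E`: each edge has an
unordered pair of endpoints. -/
structure Multigraph (V : Type*) (E : Type*) where
  ends : E → Sym2 V

namespace Multigraph

variable {V E : Type*}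

/-- The multigraph has no self-loops. -/
def Loopless (G : Multigraph V E) : Prop := ∀ e : E, ¬ (G.ends e).IsDiag

/-- Two vertices are adjacent if some edge joins them. -/
def Adj (G : Multigraph V E) (a b : V) : Prop := ∃ e : E, G.ends e = s(a, b)

/-- The (open) neighbourhood of a vertex. -/
def nbhd (G : Multigraph V E) (v : V) : Set V := {u | G.Adj v u}

/-- The neighbourhood `N_G(D)` of a set of vertices. -/
def setNbhd (G : Multigraph V E) (D : Set V) : Set V :=
  {u | u ∉ D ∧ ∃ d ∈ D, G.Adj u d}

/-- One step along an edge of `G − (X, F)`. -/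
def Step (G : Multigraph V E) (X : Set V) (F : Set E) (a b : V) : Prop :=
  a ∉ X ∧ b ∉ X ∧ ∃ e : E, e ∉ F ∧ G.ends e = s(a, b)

/-- `u` and `v` lie in the same connected component of `G − (X, F)`. -/
def Conn (G : Multigraph V E) (X : Set V) (F : Set E) (u v : V) : Prop :=
  u ∉ X ∧ v ∉ X ∧ Relation.ReflTransGen (G.Step X F) u v

end Multigraph

/-- `R` is an equivalence relation on the set `T` (and vanishes outside `T`). -/
def IsEquivOn {V : Type*} (T : Set V) (R : V → V → Prop) : Prop :=
  (∀ u v, R u v → u ∈ T ∧ v ∈ T) ∧ (∀ u ∈ T, R u u) ∧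
    (∀ u v, R u v → R v u) ∧ (∀ u v w, R u v → R v w → R u w)

/-- `(X, F)` is a solution to the MMCU instance `(G, T, R, k, l)`. -/
def IsSolution {V E : Type*} (G : Multigraph V E) (T : Set V) (R : V → V → Prop)
    (k l : ℕ) (X : Set V) (F : Set E) : Prop :=
  X ⊆ Tᶜ ∧ X.ncard ≤ k ∧ F.ncard ≤ l ∧
    ∀ u ∈ T, ∀ v ∈ T, (G.Conn X F u v ↔ R u v)

/-- `(X, F)` is a minimal solution to the MMCU instance `(G, T, R, k, l)`. -/
def IsMinSolution {V E : Type*} (G : Multigraph V E) (T : Set V) (R : V → V → Prop)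
    (k l : ℕ) (X : Set V) (F : Set E) : Prop :=
  IsSolution G T R k l X F ∧
    ∀ X' F', IsSolution G T R k l X' F' → X' ⊆ X → F' ⊆ F → X' = X ∧ F' = F

/-- The graph obtained from `G` by deleting the vertices of `U` (together with all
incident edges); the remaining vertices of `U` are isolated and no longer used. -/
def Multigraph.deleteVerts {V E : Type*} (G : Multigraph V E) (U : Set V) :
    Multigraph V {e : E // ∀ x ∈ G.ends e, x ∉ U} where
  ends := fun e => G.ends e.1

section Helpers

open Relation

variable {V E : Type*}

lemma step_symm {G : Multigraph V E} {X : Set V} {F : Set E} :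
    Symmetric (G.Step X F) := by
  rintro a b ⟨ha, hb, e, heF, he⟩
  exact ⟨hb, ha, e, heF, he.trans (Sym2.eq_swap)⟩

lemma conn_trans {G : Multigraph V E} {X : Set V} {F : Set E} {a b c : V}
    (h1 : G.Conn X F a b) (h2 : G.Conn X F b c) : G.Conn X F a c :=
  ⟨h1.1, h2.2.1, h1.2.2.trans h2.2.2⟩

lemma conn_symm {G : Multigraph V E} {X : Set V} {F : Set E} {a b : V}
    (h : G.Conn X F a b) : G.Conn X F b a :=
  ⟨h.2.1, h.1, (@ReflTransGen.stdSymm _ _ ⟨step_symm⟩).symm _ _ h.2.2⟩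

lemma exists_nbhd {G : Multigraph V E} {X : Set V} {F : Set E} {a b : V}
    (h : G.Conn X F a b) (hne : a ≠ b) : ∃ w, G.Adj a w ∧ w ∉ X := by
  rcases h.2.2.cases_head with h' | ⟨c, hc, _⟩
  · exact absurd h' hne
  · obtain ⟨_, hcX, e, _, he⟩ := hc
    exact ⟨c, ⟨e, he⟩, hcX⟩

end Helpers

lemma partA {V E : Type*} [Finite E]
    (G : Multigraph V E) (T : Set V) (R : V → V → Prop)
    (k l t : ℕ) (u : Fin t → V) (hinj : Function.Injective u)
    (hT : ∀ i, u i ∈ T)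
    (hclass : ∀ i j, R (u i) (u j))
    (hN : ∀ i j, G.nbhd (u i) = G.nbhd (u j))
    (hNT : ∀ i, G.nbhd (u i) ⊆ Tᶜ)
    (ht : l + 1 < t)
    {X : Set V} {F : Set E} (h : IsMinSolution G T R k l X F) :
    ∀ e ∈ F, ∀ j, u j ∉ G.ends e := by
  intro e he j hj
  obtain ⟨⟨hXT, hk, hl, hconn⟩, hmin⟩ := h
  obtain ⟨w, hw⟩ := Sym2.mem_iff_exists.1 hj
  have hwadj : w ∈ G.nbhd (u j) := ⟨e, hw⟩
  have hwT : w ∉ T := hNT j hwadj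
  set S : Set (Fin t) := {i | ∃ e' ∈ F, u i ∈ G.ends e'} with hSdef
  have hex : ∀ i : Fin t, ∃ e' : E, i ∈ S → e' ∈ F ∧ u i ∈ G.ends e' := by
    intro i
    by_cases hi : i ∈ S
    · obtain ⟨e', h1, h2⟩ := hi
      exact ⟨e', fun _ => ⟨h1, h2⟩⟩
    · exact ⟨e, fun h' => absurd h' hi⟩
  choose f hf using hex
  have hScard : S.ncard ≤ F.ncard := by
    apply Set.ncard_le_ncard_of_injOn f (fun i hi => (hf i hi).1)
    intro a ha b hb hfe
    by_contra hab
    have h1 : u a ∈ G.ends (f a) := (hf a ha).2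
    have h2 : u b ∈ G.ends (f a) := hfe ▸ (hf b hb).2
    obtain ⟨w', hw'⟩ := Sym2.mem_iff_exists.1 h1
    have hcase : u b = u a ∨ u b = w' := by
      rw [hw', Sym2.mem_iff] at h2; tauto
    rcases hcase with hcc | hcc
    · exact hab (hinj hcc).symm
    · exact (hcc ▸ (hNT a ⟨f a, hw'⟩)) (hT b)
  have hlt : (S ∪ {j}).ncard < (Set.univ : Set (Fin t)).ncard := by
    have h1 := Set.ncard_union_le S {j}
    have h2 : ({j} : Set (Fin t)).ncard = 1 := Set.ncard_singleton j
    have h3 : (Set.univ : Set (Fin t)).ncard = t := by simp [Set.ncard_univ]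
    omega
  obtain ⟨m, hm⟩ : ∃ m, m ∉ S ∪ {j} := by
    by_contra hcon
    push_neg at hcon
    rw [Set.eq_univ_of_forall hcon] at hlt
    exact lt_irrefl _ hlt
  have hmS : m ∉ S := fun hh => hm (Or.inl hh)
  have humX : ∀ i : Fin t, u i ∉ X := fun i hx => (hXT hx) (hT i)
  have hstep : ∀ a b, G.Step X (F \ {e}) a b → Relation.ReflTransGen (G.Step X F) a b := by
    rintro a b ⟨haX, hbX, e2, he2F, he2⟩
    by_cases hc : e2 ∈ F
    · have he2e : e2 = e := by
        by_contra hne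
        exact he2F ⟨hc, hne⟩
      subst he2e
      have hab : (u j = a ∧ w = b) ∨ (u j = b ∧ w = a) := Sym2.eq_iff.1 (hw.symm.trans he2)
      have hwX : w ∉ X := by
        rcases hab with ⟨_, hh⟩ | ⟨_, hh⟩
        exacts [hh ▸ hbX, hh ▸ haX]
      have hpath : Relation.ReflTransGen (G.Step X F) (u j) w := by
        have hconn1 : G.Conn X F (u j) (u m) := (hconn _ (hT j) _ (hT m)).2 (hclass j m)
        obtain ⟨e3, he3⟩ : w ∈ G.nbhd (u m) := (hN j m) ▸ hwadj
        have he3F : e3 ∉ F := by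
          intro hc3
          exact hmS ⟨e3, hc3, by rw [he3]; exact Sym2.mem_mk_left _ _⟩
        exact hconn1.2.2.trans (Relation.ReflTransGen.single ⟨humX m, hwX, e3, he3F, he3⟩)
      rcases hab with ⟨h1, h2⟩ | ⟨h1, h2⟩
      · exact h1 ▸ h2 ▸ hpath
      · exact h1 ▸ h2 ▸ ((@Relation.ReflTransGen.stdSymm _ _ ⟨step_symm⟩).symm _ _ hpath)
    · exact Relation.ReflTransGen.single ⟨haX, hbX, e2, hc, he2⟩
  have hsol' : IsSolution G T R k l X (F \ {e}) := by
    refine ⟨hXT, hk, le_trans (Set.ncard_le_ncard Set.diff_subset (Set.toFinite F)) hl, ?_⟩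
    intro p hp q hq
    rw [← hconn p hp q hq]
    constructor
    · rintro ⟨hpX, hqX, hpa⟩
      exact ⟨hpX, hqX, Relation.ReflTransGen.lift' id (fun a b hab => hstep a b hab) _ _ hpa⟩
    · rintro ⟨hpX, hqX, hpa⟩
      refine ⟨hpX, hqX, Relation.ReflTransGen.mono ?_ _ _ hpa⟩
      rintro a b ⟨haX, hbX, e2, he2, hends⟩
      exact ⟨haX, hbX, e2, fun hcc => he2 hcc.1, hends⟩
  have hFF := (hmin X (F \ {e}) hsol' subset_rfl Set.diff_subset).2
  have : e ∈ F \ {e} := hFF.symm ▸ he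
  exact this.2 rfl

lemma conn_transfer {V E : Type*} (G : Multigraph V E) (U' : Set V)
    (X : Set V) (F' : Set {e : E // ∀ x ∈ G.ends e, x ∉ U'})
    (u0 : V) (hu0 : u0 ∉ U') (hu0X : u0 ∉ X)
    (hnb : ∀ v ∈ U', G.nbhd v = G.nbhd u0)
    (hnbU : ∀ w ∈ G.nbhd u0, w ∉ U')
    (hF0 : ∀ e ∈ F', u0 ∉ G.ends e.1)
    {p q : V} (hp : p ∉ U') (hq : q ∉ U') :
    G.Conn X (Subtype.val '' F') p q ↔ (G.deleteVerts U').Conn X F' p q := by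
  classical
  constructor
  · rintro ⟨hpX, hqX, hpa⟩
    refine ⟨hpX, hqX, ?_⟩
    set σ : V → V := fun v => if v ∈ U' then u0 else v with hσ
    have hσp : σ p = p := if_neg hp
    have hσq : σ q = q := if_neg hq
    have hmain : ∀ a b, G.Step X (Subtype.val '' F') a b →
        Relation.ReflTransGen ((G.deleteVerts U').Step X F') (σ a) (σ b) := by
      rintro a b ⟨haX, hbX, e, heF, he⟩
      have hu0step : ∀ c, c ∈ G.nbhd u0 → c ∉ X → (G.deleteVerts U').Step X F' u0 c := by
        rintro c ⟨e2, he2⟩ hcX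
        have hprop : ∀ x ∈ G.ends e2, x ∉ U' := by
          intro x hx
          rw [he2, Sym2.mem_iff] at hx
          rcases hx with h | h
          · subst h; exact hu0
          · rw [h]; exact hnbU c ⟨e2, he2⟩
        refine ⟨hu0X, hcX, ⟨e2, hprop⟩, ?_, he2⟩
        intro hcF'
        exact hF0 _ hcF' (by rw [he2]; exact Sym2.mem_mk_left _ _)
      by_cases haU : a ∈ U'
      · have hbnb : b ∈ G.nbhd u0 := (hnb a haU) ▸ (⟨e, he⟩ : b ∈ G.nbhd a)
        have hbU : b ∉ U' := hnbU b hbnb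
        show Relation.ReflTransGen _ (if a ∈ U' then u0 else a) (if b ∈ U' then u0 else b)
        rw [if_pos haU, if_neg hbU]
        exact Relation.ReflTransGen.single (hu0step b hbnb hbX)
      · by_cases hbU : b ∈ U'
        · have hanb : a ∈ G.nbhd u0 :=
            (hnb b hbU) ▸ (⟨e, he.trans Sym2.eq_swap⟩ : a ∈ G.nbhd b)
          show Relation.ReflTransGen _ (if a ∈ U' then u0 else a) (if b ∈ U' then u0 else b)
          rw [if_neg haU, if_pos hbU]
          exact Relation.ReflTransGen.single (step_symm (hu0step a hanb haX))
        · show Relation.ReflTransGen _ (if a ∈ U' then u0 else a) (if b ∈ U' then u0 else b)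
          rw [if_neg haU, if_neg hbU]
          have hprop : ∀ x ∈ G.ends e, x ∉ U' := by
            intro x hx
            rw [he, Sym2.mem_iff] at hx
            rcases hx with rfl | rfl
            exacts [haU, hbU]
          refine Relation.ReflTransGen.single ⟨haX, hbX, ⟨e, hprop⟩, ?_, he⟩
          intro hmem
          exact heF ⟨⟨e, hprop⟩, hmem, rfl⟩
    have : Relation.ReflTransGen ((G.deleteVerts U').Step X F') (σ p) (σ q) :=
      Relation.ReflTransGen.lift' σ hmain _ _ hpa
    rwa [hσp, hσq] at this
  · rintro ⟨hpX, hqX, hpa⟩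
    refine ⟨hpX, hqX, Relation.ReflTransGen.mono ?_ _ _ hpa⟩
    rintro a b ⟨haX, hbX, e', he'F, he'⟩
    refine ⟨haX, hbX, e'.1, ?_, he'⟩
    rintro ⟨e'', he''F, he''⟩
    have heq : e'' = e' := Subtype.ext he''
    exact he'F (heq ▸ he''F)


/-- Let `u₁, …, u_t` be pairwise distinct, pairwise nonadjacent
terminals of the same equivalence class of `R` with identical neighbourhoods contained
in `V(G) \ T`, and `t > l + 2`. Let `I'` be obtained from `I` by deleting the terminals
`u_{l+3}, …, u_t`. Then no minimal solution of `I` deletes an edge incident to a deleted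
terminal, and (under the natural correspondence of the remaining edges) the minimal
solutions of `I` and of `I'` coincide. -/
theorem stmt8 {V E : Type*} [Fintype V] [Fintype E]
    (G : Multigraph V E) (hG : G.Loopless)
    (T : Set V) (R : V → V → Prop) (hR : IsEquivOn T R) (k l t : ℕ)
    (u : Fin t → V) (hinj : Function.Injective u) (hT : ∀ i, u i ∈ T)
    (hclass : ∀ i j, R (u i) (u j))
    (hnonadj : ∀ i j, i ≠ j → ¬ G.Adj (u i) (u j))
    (hN : ∀ i j, G.nbhd (u i) = G.nbhd (u j))
    (hNT : ∀ i, G.nbhd (u i) ⊆ Tᶜ)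
    (ht : l + 2 < t)
    (U' : Set V) (hU' : U' = {x | ∃ i : Fin t, l + 2 ≤ (i : ℕ) ∧ x = u i}) :
    (∀ X F, IsMinSolution G T R k l X F → ∀ e ∈ F, ∀ x ∈ G.ends e, x ∉ U') ∧
    (∀ (X : Set V) (F' : Set {e : E // ∀ x ∈ G.ends e, x ∉ U'}),
      IsMinSolution (G.deleteVerts U') (T \ U')
          (fun a b => a ∉ U' ∧ b ∉ U' ∧ R a b) k l X F' ↔
        IsMinSolution G T R k l X (Subtype.val '' F')) := by
  classical
  obtain ⟨hR1, hR2, hR3, hR4⟩ := hR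
  have hUT : U' ⊆ T := by
    rintro x hx
    rw [hU'] at hx
    obtain ⟨i, _, rfl⟩ := hx
    exact hT i
  have hmemU : ∀ m : Fin t, u m ∈ U' ↔ l + 2 ≤ (m : ℕ) := by
    intro m
    rw [hU']
    constructor
    · rintro ⟨i, hi, heq⟩
      rw [hinj heq]
      exact hi
    · intro hm
      exact ⟨m, hm, rfl⟩
  set i0 : Fin t := ⟨0, by omega⟩ with hi0def
  set i1 : Fin t := ⟨1, by omega⟩ with hi1def
  have hu0U : u i0 ∉ U' := by rw [hmemU i0]; simp [hi0def]
  have hu1U : u i1 ∉ U' := by rw [hmemU i1]; simp [hi1def]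
  have hu01 : u i0 ≠ u i1 := by
    intro h
    have := hinj h
    rw [hi0def, hi1def, Fin.ext_iff] at this
    simp at this
  have partA_I : ∀ X F, IsMinSolution G T R k l X F →
      ∀ e ∈ F, ∀ j : Fin t, u j ∉ G.ends e :=
    fun X F h => partA G T R k l t u hinj hT hclass hN hNT (by omega) h
  refine ⟨?_, ?_⟩
  · intro X F h e he x hx hxU
    rw [hU'] at hxU
    obtain ⟨i, _, rfl⟩ := hxU
    exact partA_I X F h e he i hx
  intro X F'
  -- the instance I' data
  set R' : V → V → Prop := fun a b => a ∉ U' ∧ b ∉ U' ∧ R a b with hR'def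
  have hnbhd' : ∀ v : V, v ∉ U' → G.nbhd v ⊆ Tᶜ →
      (G.deleteVerts U').nbhd v = G.nbhd v := by
    intro v hv hvsub
    ext w
    constructor
    · rintro ⟨e', he'⟩
      exact ⟨e'.1, he'⟩
    · rintro ⟨e, he⟩
      have hprop : ∀ x ∈ G.ends e, x ∉ U' := by
        intro x hx
        rw [he, Sym2.mem_iff] at hx
        rcases hx with h | h
        · subst h; exact hv
        · rw [h]; intro hwU; exact (hvsub ⟨e, he⟩) (hUT hwU)
      exact ⟨⟨e, hprop⟩, he⟩
  have hR' : IsEquivOn (T \ U') R' := by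
    refine ⟨?_, ?_, ?_, ?_⟩
    · rintro a b ⟨ha, hb, hab⟩
      exact ⟨⟨(hR1 a b hab).1, ha⟩, ⟨(hR1 a b hab).2, hb⟩⟩
    · rintro a ⟨haT, haU⟩
      exact ⟨haU, haU, hR2 a haT⟩
    · rintro a b ⟨ha, hb, hab⟩
      exact ⟨hb, ha, hR3 a b hab⟩
    · rintro a b c ⟨ha, hb, hab⟩ ⟨_, hc, hbc⟩
      exact ⟨ha, hc, hR4 a b c hab hbc⟩
  set u' : Fin (l + 2) → V := fun i => u (Fin.castLE (le_of_lt ht) i) with hu'def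
  have hu'U : ∀ i : Fin (l + 2), u' i ∉ U' := by
    intro i
    rw [hu'def]
    rw [hmemU]
    have := i.isLt
    simp only [Fin.coe_castLE]
    omega
  have hinj' : Function.Injective u' := by
    intro a b hab
    have h2 := hinj hab
    rwa [Fin.castLE_inj] at h2
  have hT' : ∀ i, u' i ∈ T \ U' := fun i => ⟨hT _, hu'U i⟩
  have hclass' : ∀ i j, R' (u' i) (u' j) := fun i j => ⟨hu'U i, hu'U j, hclass _ _⟩
  have hN' : ∀ i j, (G.deleteVerts U').nbhd (u' i) = (G.deleteVerts U').nbhd (u' j) := by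
    intro i j
    rw [hnbhd' _ (hu'U i) (hNT _), hnbhd' _ (hu'U j) (hNT _)]
    exact hN _ _
  have hNT' : ∀ i, (G.deleteVerts U').nbhd (u' i) ⊆ (T \ U')ᶜ := by
    intro i
    rw [hnbhd' _ (hu'U i) (hNT _)]
    intro w hw hwT
    exact (hNT _ hw) hwT.1
  have partA_I' : ∀ (Y : Set V) (F₂' : Set {e : E // ∀ x ∈ G.ends e, x ∉ U'}),
      IsMinSolution (G.deleteVerts U') (T \ U') R' k l Y F₂' →
      ∀ e' ∈ F₂', ∀ m : Fin t, u m ∉ G.ends e'.1 := by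
    intro Y F₂' h e' he' m hm
    by_cases hlt : (m : ℕ) < l + 2
    · exact partA (G.deleteVerts U') (T \ U') R' k l (l + 2) u' hinj' hT' hclass'
        hN' hNT' (by omega) h e' he' ⟨m, hlt⟩ hm
    · exact e'.2 _ hm ((hmemU m).2 (by omega))
  -- the central equivalence of connectivity conditions
  have main_iff : ∀ (Y : Set V) (F₂' : Set {e : E // ∀ x ∈ G.ends e, x ∉ U'}),
      Y ⊆ Tᶜ →
      (∀ e ∈ F₂', ∀ m : Fin t, u m ∉ G.ends e.1) →
      (∃ w, G.Adj (u i0) w ∧ w ∉ Y) →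
      ((∀ p ∈ T \ U', ∀ q ∈ T \ U',
          ((G.deleteVerts U').Conn Y F₂' p q ↔ R' p q)) ↔
        (∀ p ∈ T, ∀ q ∈ T, (G.Conn Y (Subtype.val '' F₂') p q ↔ R p q))) := by
    intro Y F₂' hYT hFu hw
    have hu0Y : u i0 ∉ Y := fun hh => hYT hh (hT i0)
    have htr : ∀ p q : V, p ∉ U' → q ∉ U' →
        (G.Conn Y (Subtype.val '' F₂') p q ↔ (G.deleteVerts U').Conn Y F₂' p q) := by
      intro p q hp hq
      refine conn_transfer G U' Y F₂' (u i0) hu0U hu0Y ?_ ?_ ?_ hp hq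
      · intro v hv
        rw [hU'] at hv
        obtain ⟨i, _, rfl⟩ := hv
        exact hN i i0
      · intro w hwn hwU
        exact (hNT i0 hwn) (hUT hwU)
      · intro e heF' hmem
        exact hFu e heF' i0 hmem
    obtain ⟨w, ⟨ew, hew⟩, hwY⟩ := hw
    have humY : ∀ i : Fin t, u i ∉ Y := fun i hh => hYT hh (hT i)
    have hrep : ∀ m : Fin t, G.Conn Y (Subtype.val '' F₂') (u m) (u i0) := by
      intro m
      obtain ⟨em, hem⟩ : w ∈ G.nbhd (u m) := (hN i0 m) ▸ (⟨ew, hew⟩ : w ∈ G.nbhd (u i0))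
      have hemF : em ∉ Subtype.val '' F₂' := by
        rintro ⟨e', he', rfl⟩
        exact hFu e' he' m (by rw [hem]; exact Sym2.mem_mk_left _ _)
      have hewF : ew ∉ Subtype.val '' F₂' := by
        rintro ⟨e', he', rfl⟩
        exact hFu e' he' i0 (by rw [hew]; exact Sym2.mem_mk_left _ _)
      exact ⟨humY m, humY i0,
        (Relation.ReflTransGen.single ⟨humY m, hwY, em, hemF, hem⟩).trans
          (Relation.ReflTransGen.single ⟨hwY, humY i0, ew, hewF, hew.trans Sym2.eq_swap⟩)⟩
    constructor
    · intro hconn'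
      have base : ∀ p ∈ T \ U', ∀ q ∈ T \ U',
          (G.Conn Y (Subtype.val '' F₂') p q ↔ R p q) := by
        intro p hp q hq
        rw [htr p q hp.2 hq.2, hconn' p hp q hq]
        exact ⟨fun hh => hh.2.2, fun hh => ⟨hp.2, hq.2, hh⟩⟩
      have norm : ∀ r ∈ T, ∃ r', r' ∈ T \ U' ∧
          G.Conn Y (Subtype.val '' F₂') r r' ∧ R r r' := by
        intro r hr
        by_cases hrU : r ∈ U'
        · rw [hU'] at hrU
          obtain ⟨i, _, rfl⟩ := hrU
          exact ⟨u i0, ⟨hT i0, hu0U⟩, hrep i, hclass i i0⟩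
        · exact ⟨r, ⟨hr, hrU⟩, ⟨fun hh => hYT hh hr, fun hh => hYT hh hr,
            Relation.ReflTransGen.refl⟩, hR2 r hr⟩
      intro p hp q hq
      obtain ⟨p', hp', hcp, hRp⟩ := norm p hp
      obtain ⟨q', hq', hcq, hRq⟩ := norm q hq
      constructor
      · intro hh
        have hcc : G.Conn Y (Subtype.val '' F₂') p' q' :=
          conn_trans (conn_symm hcp) (conn_trans hh hcq)
        have hRR := (base p' hp' q' hq').1 hcc
        exact hR4 _ _ _ hRp (hR4 _ _ _ hRR (hR3 _ _ hRq))
      · intro hh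
        have hRR : R p' q' := hR4 _ _ _ (hR3 _ _ hRp) (hR4 _ _ _ hh hRq)
        have hcc := (base p' hp' q' hq').2 hRR
        exact conn_trans hcp (conn_trans hcc (conn_symm hcq))
    · intro hconnG p hp q hq
      rw [← htr p q hp.2 hq.2, hconnG p hp.1 q hq.1]
      exact ⟨fun hh => ⟨hp.2, hq.2, hh⟩, fun hh => hh.2.2⟩
  constructor
  · -- I' minimal → I minimal
    intro h'
    obtain ⟨hYT', hk', hl', hconn'⟩ := h'.1
    have hFu : ∀ e ∈ F', ∀ m : Fin t, u m ∉ G.ends e.1 := partA_I' X F' h'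
    have hXU : ∀ v ∈ U', v ∉ X := by
      intro v hvU hvX
      have hstepeq : ∀ a b, (G.deleteVerts U').Step (X \ {v}) F' a b ↔
          (G.deleteVerts U').Step X F' a b := by
        intro a b
        constructor
        · rintro ⟨ha, hb, e', he'F, he'⟩
          have he2 : G.ends e'.1 = s(a, b) := he'
          have haX : a ∉ X := by
            by_cases hav : a = v
            · exfalso
              exact e'.2 v (by rw [he2, ← hav]; exact Sym2.mem_mk_left _ _) hvU
            · intro hX; exact ha ⟨hX, hav⟩
          have hbX : b ∉ X := by
            by_cases hbv : b = v
            · exfalso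
              exact e'.2 v (by rw [he2, ← hbv]; exact Sym2.mem_mk_right _ _) hvU
            · intro hX; exact hb ⟨hX, hbv⟩
          exact ⟨haX, hbX, e', he'F, he'⟩
        · rintro ⟨ha, hb, e', he'F, he'⟩
          exact ⟨fun hh => ha hh.1, fun hh => hb hh.1, e', he'F, he'⟩
      have hsolv : IsSolution (G.deleteVerts U') (T \ U') R' k l (X \ {v}) F' := by
        refine ⟨fun x hx => hYT' hx.1,
          le_trans (Set.ncard_le_ncard Set.diff_subset (Set.toFinite X)) hk', hl', ?_⟩
        intro p hp q hq
        rw [← hconn' p hp q hq]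
        have hpv : p ≠ v := fun hh => hp.2 (hh ▸ hvU)
        have hqv : q ≠ v := fun hh => hq.2 (hh ▸ hvU)
        constructor
        · rintro ⟨hpX, hqX, hpa⟩
          exact ⟨fun hh => hpX ⟨hh, hpv⟩, fun hh => hqX ⟨hh, hqv⟩,
            Relation.ReflTransGen.mono (fun a b hh => (hstepeq a b).1 hh) _ _ hpa⟩
        · rintro ⟨hpX, hqX, hpa⟩
          exact ⟨fun hh => hpX hh.1, fun hh => hqX hh.1,
            Relation.ReflTransGen.mono (fun a b hh => (hstepeq a b).2 hh) _ _ hpa⟩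
      have hXeq := (h'.2 (X \ {v}) F' hsolv Set.diff_subset subset_rfl).1
      have hv' : v ∈ X \ {v} := hXeq.symm ▸ hvX
      exact hv'.2 rfl
    have hXT : X ⊆ Tᶜ := by
      intro v hv hvT
      by_cases hvU : v ∈ U'
      · exact hXU v hvU hv
      · exact hYT' hv ⟨hvT, hvU⟩
    have hw : ∃ w, G.Adj (u i0) w ∧ w ∉ X := by
      have hc := (hconn' (u i0) ⟨hT i0, hu0U⟩ (u i1) ⟨hT i1, hu1U⟩).2
        ⟨hu0U, hu1U, hclass i0 i1⟩
      obtain ⟨w, ⟨e', he'⟩, hwX⟩ := exists_nbhd hc hu01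
      exact ⟨w, ⟨e'.1, he'⟩, hwX⟩
    have hsolI : IsSolution G T R k l X (Subtype.val '' F') := by
      refine ⟨hXT, hk', ?_, ?_⟩
      · rwa [Set.ncard_image_of_injective _ Subtype.val_injective]
      · exact (main_iff X F' hXT hFu hw).1 hconn'
    refine ⟨hsolI, ?_⟩
    intro X₂ F₂ hsol2 hX2 hF2
    have hF2range : F₂ ⊆ Set.range (Subtype.val) := fun e hee => by
      obtain ⟨e', _, rfl⟩ := hF2 hee
      exact ⟨e', rfl⟩
    have hF2eq : Subtype.val '' (Subtype.val ⁻¹' F₂) = F₂ :=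
      Set.image_preimage_eq_of_subset hF2range
    have hF₂'sub : Subtype.val ⁻¹' F₂ ⊆ F' := by
      intro e' he'
      obtain ⟨e'', he''F, he''⟩ := hF2 he'
      rwa [Subtype.val_injective he''] at he''F
    obtain ⟨hs1, hs2, hs3, hs4⟩ := hsol2
    have hFu₂ : ∀ e ∈ Subtype.val ⁻¹' F₂, ∀ m : Fin t, u m ∉ G.ends e.1 :=
      fun e hee m => hFu e (hF₂'sub hee) m
    have hw₂ : ∃ w, G.Adj (u i0) w ∧ w ∉ X₂ := by
      have hc := (hs4 (u i0) (hT i0) (u i1) (hT i1)).2 (hclass i0 i1)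
      exact exists_nbhd hc hu01
    have hsol2' : IsSolution (G.deleteVerts U') (T \ U') R' k l X₂ (Subtype.val ⁻¹' F₂) := by
      refine ⟨fun v hv hvT => hs1 hv hvT.1, hs2, ?_, ?_⟩
      · rw [← hF2eq, Set.ncard_image_of_injective _ Subtype.val_injective] at hs3
        exact hs3
      · refine (main_iff X₂ (Subtype.val ⁻¹' F₂) hs1 hFu₂ hw₂).2 ?_
        intro p hp q hq
        rw [hF2eq]
        exact hs4 p hp q hq
    obtain ⟨hX2eq, hF2'eq⟩ := h'.2 X₂ (Subtype.val ⁻¹' F₂) hsol2' hX2 hF₂'sub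
    exact ⟨hX2eq, by rw [← hF2eq, hF2'eq]⟩
  · -- I minimal → I' minimal
    intro h
    obtain ⟨hXT, hk1, hl1, hconnG⟩ := h.1
    have hFu : ∀ e ∈ F', ∀ m : Fin t, u m ∉ G.ends e.1 := by
      intro e' he' m
      exact partA_I X (Subtype.val '' F') h e'.1 ⟨e', he', rfl⟩ m
    have hw : ∃ w, G.Adj (u i0) w ∧ w ∉ X := by
      have hc := (hconnG (u i0) (hT i0) (u i1) (hT i1)).2 (hclass i0 i1)
      exact exists_nbhd hc hu01
    have hsol' : IsSolution (G.deleteVerts U') (T \ U') R' k l X F' := by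
      refine ⟨fun v hv hvT => hXT hv hvT.1, hk1, ?_, ?_⟩
      · rwa [Set.ncard_image_of_injective _ Subtype.val_injective] at hl1
      · exact (main_iff X F' hXT hFu hw).2 hconnG
    refine ⟨hsol', ?_⟩
    intro X₂ F₂' hsol2' hX2 hF2'
    obtain ⟨hs1, hs2, hs3, hs4⟩ := hsol2'
    have hX2T : X₂ ⊆ Tᶜ := hX2.trans hXT
    have hFu₂ : ∀ e ∈ F₂', ∀ m : Fin t, u m ∉ G.ends e.1 :=
      fun e hee m => hFu e (hF2' hee) m
    have hw₂ : ∃ w, G.Adj (u i0) w ∧ w ∉ X₂ := by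
      have hc := (hs4 (u i0) ⟨hT i0, hu0U⟩ (u i1) ⟨hT i1, hu1U⟩).2
        ⟨hu0U, hu1U, hclass i0 i1⟩
      obtain ⟨w, ⟨e', he'⟩, hwX⟩ := exists_nbhd hc hu01
      exact ⟨w, ⟨e'.1, he'⟩, hwX⟩
    have hsol2 : IsSolution G T R k l X₂ (Subtype.val '' F₂') := by
      refine ⟨hX2T, hs2, ?_, ?_⟩
      · rwa [Set.ncard_image_of_injective _ Subtype.val_injective]
      · exact (main_iff X₂ F₂' hX2T hFu₂ hw₂).1 hs4
    obtain ⟨hXeq, hFeq⟩ := h.2 X₂ (Subtype.val '' F₂') hsol2 hX2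
      (Set.image_mono hF2')
    exact ⟨hXeq, Set.image_injective.2 Subtype.val_injective hFeq⟩
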